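/- There is no co-circular four-body central configuration with vanishing total mass and vanishing vector of inertia: there exist no pairwise distinct points r₁, r₂, r₃, r₄ lying on a common circle in the Euclidean plane and nonzero real masses m₁, m₂, m₃, m₄ with m₁ + m₂ + m₃ + m₄ = 0 and m₁r₁ + m₂r₂ + m₃r₃ + m₄r₄ = 0 such that the configuration is central with some multiplier ξ. -/

import Mathlib

/-- The gravitational acceleration of body `i` in a planar `N`-body configuration
with masses `m` and positions `r`. -/
noncomputable def accel {N : ℕ} (m : Fin N → ℝ) (r : Fin N → EuclideanSpace ℝ (Fin 2))
    (i : Fin N) : EuclideanSpace ℝ (Fin 2) :=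
  ∑ j ∈ Finset.univ.erase i, (m j / ‖r j - r i‖ ^ 3) • (r j - r i)

/-- The configuration is central with multiplier `ξ`:
`γ_j - γ_i = ξ • (r_j - r_i)` for all `i`, `j`. -/
def IsCentral {N : ℕ} (m : Fin N → ℝ) (r : Fin N → EuclideanSpace ℝ (Fin 2)) (ξ : ℝ) : Prop :=
  ∀ i j, accel m r j - accel m r i = ξ • (r j - r i)

open Real RealInnerProductSpace

lemma tri1 (a b c : ℝ) :
    (cos (2*b) - cos (2*a))*(sin (2*c) - sin (2*a))
      - (sin (2*b) - sin (2*a))*(cos (2*c) - cos (2*a))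
    = 4 * sin (b-a) * sin (c-a) * sin (c-b) := by
  have h1 : cos (2*b) - cos (2*a) = -2 * sin (b+a) * sin (b-a) := by
    rw [Real.cos_sub_cos]; ring_nf
  have h2 : sin (2*c) - sin (2*a) = 2 * sin (c-a) * cos (c+a) := by
    rw [Real.sin_sub_sin]; ring_nf
  have h3 : sin (2*b) - sin (2*a) = 2 * sin (b-a) * cos (b+a) := by
    rw [Real.sin_sub_sin]; ring_nf
  have h4 : cos (2*c) - cos (2*a) = -2 * sin (c+a) * sin (c-a) := by
    rw [Real.cos_sub_cos]; ring_nf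
  have h5 : sin (c-b) = sin (c+a) * cos (b+a) - cos (c+a) * sin (b+a) := by
    rw [show c - b = (c+a) - (b+a) by ring, Real.sin_sub]
  rw [h1, h2, h3, h4, h5]; ring

lemma sqrt_eq_of_sq_eq_sq {a b : ℝ} (ha : 0 < a) (hb : 0 < b) (h : a^2 = b^2) : a = b := by
  have h2 : (a - b) * (a + b) = 0 := by linear_combination h
  rcases mul_eq_zero.mp h2 with h' | h'
  · linarith
  · linarith

/-- Ptolemy identity for sines. -/
lemma ptolemy (a b c d : ℝ) :
    sin (c-a) * sin (d-b) = sin (b-a) * sin (d-c) + sin (c-b) * sin (d-a) := by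
  simp only [Real.sin_sub, Real.cos_sub]; ring

lemma idI3 (a b c d : ℝ) :
    sin (d-c) * sin (d-b) - sin (b-a) * sin (c-a) = sin (d-a) * sin (a+d-b-c) := by
  simp only [show a+d-b-c = (a-b) + (d-c) by ring, Real.sin_add, Real.sin_sub, Real.cos_sub]
  linear_combination (-(cos b*cos c) + cos b*cos c*cos d^2 + cos b*sin c*sin d*cos d
      + sin b*cos c*sin d*cos d - sin b*sin c*cos d^2) * (sin_sq_add_cos_sq a)
    + (cos b*cos c - cos a^2*cos b*cos c + cos a^2*sin b*sin c
      - sin a*cos a*cos b*sin c - sin a*cos a*sin b*cos c) * (sin_sq_add_cos_sq d)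

lemma idI4 (a b c d : ℝ) :
    sin (b-a) * sin (d-b) - sin (d-c) * sin (c-a) = sin (c-b) * sin (b+c-a-d) := by
  simp only [show b+c-a-d = (b-a) + (c-d) by ring, Real.sin_add, Real.sin_sub, Real.cos_sub]
  linear_combination (-(cos a*cos d) + cos a*cos c^2*cos d + cos a*sin c*cos c*sin d
      - sin a*cos c^2*sin d + sin a*sin c*cos c*cos d) * (sin_sq_add_cos_sq b)
    + (cos a*cos d - cos a*cos b^2*cos d - cos a*sin b*cos b*sin d
      + sin a*cos b^2*sin d - sin a*sin b*cos b*cos d) * (sin_sq_add_cos_sq c)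

/-- Core algebraic inequality. -/
lemma coreIneq (p q r s e f : ℝ) (hp : 0 < p) (hq : 0 < q) (hr : 0 < r) (hs : 0 < s)
    (he : 0 < e) (hf : 0 < f) (hPt : e * f = p * r + q * s)
    (hI : (r*f - p*e) * (p*f - r*e) ≤ 0) :
    f/e^2 + e/f^2 < (p^3+r^3)/(p^2*r^2) + (q^3+s^3)/(q^2*s^2) := by
  have hef : p*r < e*f := by nlinarith [mul_pos hq hs]
  have hIineq : p*r*(e^2+f^2) ≤ (p^2+r^2)*(e*f) := by nlinarith [hI]
  have hprpos : (0:ℝ) < p*r := mul_pos hp hr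
  have hefpos : (0:ℝ) < e*f := mul_pos he hf
  have h1 : p*r*(e+f) < e*f*(p+r) := by
    have k1 : p*r*(p*r*(e^2+f^2)) ≤ p*r*((p^2+r^2)*(e*f)) :=
      mul_le_mul_of_nonneg_left hIineq hprpos.le
    have k2 : (p*r)*((p^2+r^2)*(e*f)) < (e*f)*((p^2+r^2)*(e*f)) := by
      apply mul_lt_mul_of_pos_right hef
      positivity
    have k3 : (2*(p*r)*(e*f))*(p*r) < (2*(p*r)*(e*f))*(e*f) := by
      apply mul_lt_mul_of_pos_left hef
      positivity
    have hsq : (p*r*(e+f))^2 < (e*f*(p+r))^2 := by nlinarith [k1, k2, k3]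
    nlinarith [hsq, mul_pos hprpos (add_pos he hf), mul_pos hefpos (add_pos hp hr)]
  have h2 : p*r*(e^2 - e*f + f^2) ≤ e*f*(p^2 - p*r + r^2) := by nlinarith [hIineq]
  have hApos : 0 < p*r*(e+f) := by positivity
  have hBpos : 0 < e*f*(p^2 - p*r + r^2) := by nlinarith [sq_nonneg (p-r), hefpos]
  have h3 : (e^3+f^3)*(p^2*r^2) < (p^3+r^3)*(e^2*f^2) := by
    calc (e^3+f^3)*(p^2*r^2) = (p*r*(e+f)) * (p*r*(e^2-e*f+f^2)) := by ring
      _ ≤ (p*r*(e+f)) * (e*f*(p^2-p*r+r^2)) := mul_le_mul_of_nonneg_left h2 hApos.le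
      _ < (e*f*(p+r)) * (e*f*(p^2-p*r+r^2)) := mul_lt_mul_of_pos_right h1 hBpos
      _ = (p^3+r^3)*(e^2*f^2) := by ring
  have hfe : f/e^2 + e/f^2 = (e^3+f^3)/(e^2*f^2) := by field_simp; ring
  have hlt : (e^3+f^3)/(e^2*f^2) < (p^3+r^3)/(p^2*r^2) := by
    rw [div_lt_div_iff₀ (by positivity) (by positivity)]
    linarith [h3]
  have hqs : 0 < (q^3+s^3)/(q^2*s^2) := by positivity
  linarith [hfe ▸ hlt, hqs]

set_option maxHeartbeats 1000000 in
lemma keyK (ρ θ0 θ1 θ2 θ3 M0 M1 M2 M3 d01 d02 d03 d12 d13 d23 : ℝ)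
    (hρ : 0 < ρ)
    (h01 : θ0 < θ1) (h12 : θ1 < θ2) (h23 : θ2 < θ3) (hrange : θ3 < θ0 + 2*π)
    (hM0 : M0 ≠ 0)
    (hsum : M0 + M1 + M2 + M3 = 0)
    (hcos : M0 * cos θ0 + M1 * cos θ1 + M2 * cos θ2 + M3 * cos θ3 = 0)
    (hsin : M0 * sin θ0 + M1 * sin θ1 + M2 * sin θ2 + M3 * sin θ3 = 0)
    (hd01 : 0 < d01) (hq01 : d01^2 = 2*ρ^2*(1 - (cos θ0 * cos θ1 + sin θ0 * sin θ1)))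
    (hd02 : 0 < d02) (hq02 : d02^2 = 2*ρ^2*(1 - (cos θ0 * cos θ2 + sin θ0 * sin θ2)))
    (hd03 : 0 < d03) (hq03 : d03^2 = 2*ρ^2*(1 - (cos θ0 * cos θ3 + sin θ0 * sin θ3)))
    (hd12 : 0 < d12) (hq12 : d12^2 = 2*ρ^2*(1 - (cos θ1 * cos θ2 + sin θ1 * sin θ2)))
    (hd13 : 0 < d13) (hq13 : d13^2 = 2*ρ^2*(1 - (cos θ1 * cos θ3 + sin θ1 * sin θ3)))
    (hd23 : 0 < d23) (hq23 : d23^2 = 2*ρ^2*(1 - (cos θ2 * cos θ3 + sin θ2 * sin θ3))) :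
    M0*M1/d01 + M0*M2/d02 + M0*M3/d03 + M1*M2/d12 + M1*M3/d13 + M2*M3/d23 < 0 := by
  obtain ⟨φ0, rfl⟩ : ∃ t, θ0 = 2*t := ⟨θ0/2, by ring⟩
  obtain ⟨φ1, rfl⟩ : ∃ t, θ1 = 2*t := ⟨θ1/2, by ring⟩
  obtain ⟨φ2, rfl⟩ : ∃ t, θ2 = 2*t := ⟨θ2/2, by ring⟩
  obtain ⟨φ3, rfl⟩ : ∃ t, θ3 = 2*t := ⟨θ3/2, by ring⟩
  -- positivity of the sines of half-differences
  have hs01 : 0 < sin (φ1 - φ0) := sin_pos_of_pos_of_lt_pi (by linarith) (by linarith)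
  have hs02 : 0 < sin (φ2 - φ0) := sin_pos_of_pos_of_lt_pi (by linarith) (by linarith)
  have hs03 : 0 < sin (φ3 - φ0) := sin_pos_of_pos_of_lt_pi (by linarith) (by linarith)
  have hs12 : 0 < sin (φ2 - φ1) := sin_pos_of_pos_of_lt_pi (by linarith) (by linarith)
  have hs13 : 0 < sin (φ3 - φ1) := sin_pos_of_pos_of_lt_pi (by linarith) (by linarith)
  have hs23 : 0 < sin (φ3 - φ2) := sin_pos_of_pos_of_lt_pi (by linarith) (by linarith)
  -- chord formula
  have hC : ∀ x y : ℝ, cos (2*x) * cos (2*y) + sin (2*x) * sin (2*y) = 1 - 2*sin (y-x)^2 := by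
    intro x y
    have h1 := Real.cos_sub (2*y) (2*x)
    have h4 : (2:ℝ)*y - 2*x = 2*(y-x) := by ring
    rw [h4] at h1
    have h2 := Real.cos_two_mul (y-x)
    have h3 := Real.sin_sq_add_cos_sq (y-x)
    linear_combination -h1 + h2 + 2*h3
  have hde : ∀ (d : ℝ) (x y : ℝ), 0 < d → 0 < sin (y - x) →
      d^2 = 2*ρ^2*(1 - (cos (2*x) * cos (2*y) + sin (2*x) * sin (2*y))) → d = 2*ρ*sin (y-x) := by
    intro d x y hd hs hq
    refine sqrt_eq_of_sq_eq_sq hd (by positivity) ?_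
    rw [hq, hC x y]; ring
  have hd01e := hde d01 φ0 φ1 hd01 hs01 hq01
  have hd02e := hde d02 φ0 φ2 hd02 hs02 hq02
  have hd03e := hde d03 φ0 φ3 hd03 hs03 hq03
  have hd12e := hde d12 φ1 φ2 hd12 hs12 hq12
  have hd13e := hde d13 φ1 φ3 hd13 hs13 hq13
  have hd23e := hde d23 φ2 φ3 hd23 hs23 hq23
  -- relations among masses (Cramer with rows of the circle points)
  have rel1 : M0 * (4 * sin (φ2-φ0) * sin (φ3-φ0) * sin (φ3-φ2))
      + M1 * (4 * sin (φ2-φ1) * sin (φ3-φ1) * sin (φ3-φ2)) = 0 := by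
    have t0 := tri1 φ0 φ2 φ3
    have t1 := tri1 φ1 φ2 φ3
    linear_combination (cos (2*φ2)*sin (2*φ3) - sin (2*φ2)*cos (2*φ3)) * hsum
      + (sin (2*φ2) - sin (2*φ3)) * hcos + (cos (2*φ3) - cos (2*φ2)) * hsin
      - M0 * t0 - M1 * t1
  have rel2 : M0 * (4 * sin (φ1-φ0) * sin (φ3-φ0) * sin (φ3-φ1))
      + M2 * (4 * sin (φ1-φ2) * sin (φ3-φ2) * sin (φ3-φ1)) = 0 := by
    have t0 := tri1 φ0 φ1 φ3
    have t2 := tri1 φ2 φ1 φ3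
    linear_combination (cos (2*φ1)*sin (2*φ3) - sin (2*φ1)*cos (2*φ3)) * hsum
      + (sin (2*φ1) - sin (2*φ3)) * hcos + (cos (2*φ3) - cos (2*φ1)) * hsin
      - M0 * t0 - M2 * t2
  have rel3 : M0 * (4 * sin (φ1-φ0) * sin (φ2-φ0) * sin (φ2-φ1))
      + M3 * (4 * sin (φ1-φ3) * sin (φ2-φ3) * sin (φ2-φ1)) = 0 := by
    have t0 := tri1 φ0 φ1 φ2
    have t3 := tri1 φ3 φ1 φ2
    linear_combination (cos (2*φ1)*sin (2*φ2) - sin (2*φ1)*cos (2*φ2)) * hsum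
      + (sin (2*φ1) - sin (2*φ2)) * hcos + (cos (2*φ2) - cos (2*φ1)) * hsin
      - M0 * t0 - M3 * t3
  -- explicit mass formulas
  have hn12 : sin (φ1-φ2) = -sin (φ2-φ1) := by
    rw [show φ1-φ2 = -(φ2-φ1) by ring, Real.sin_neg]
  have hn13 : sin (φ1-φ3) = -sin (φ3-φ1) := by
    rw [show φ1-φ3 = -(φ3-φ1) by ring, Real.sin_neg]
  have hn23 : sin (φ2-φ3) = -sin (φ3-φ2) := by
    rw [show φ2-φ3 = -(φ3-φ2) by ring, Real.sin_neg]
  have r1 : M0 * (sin (φ2-φ0) * sin (φ3-φ0)) + M1 * (sin (φ2-φ1) * sin (φ3-φ1)) = 0 := by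
    have h : (M0 * (sin (φ2-φ0) * sin (φ3-φ0)) + M1 * (sin (φ2-φ1) * sin (φ3-φ1))) * (4 * sin (φ3-φ2)) = 0 := by
      linear_combination rel1
    exact (mul_eq_zero.mp h).resolve_right (by positivity)
  have r2 : M0 * (sin (φ1-φ0) * sin (φ3-φ0)) - M2 * (sin (φ2-φ1) * sin (φ3-φ2)) = 0 := by
    rw [hn12] at rel2
    have h : (M0 * (sin (φ1-φ0) * sin (φ3-φ0)) - M2 * (sin (φ2-φ1) * sin (φ3-φ2))) * (4 * sin (φ3-φ1)) = 0 := by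
      linear_combination rel2
    exact (mul_eq_zero.mp h).resolve_right (by positivity)
  have r3 : M0 * (sin (φ1-φ0) * sin (φ2-φ0)) + M3 * (sin (φ3-φ1) * sin (φ3-φ2)) = 0 := by
    rw [hn13, hn23] at rel3
    have h : (M0 * (sin (φ1-φ0) * sin (φ2-φ0)) + M3 * (sin (φ3-φ1) * sin (φ3-φ2))) * (4 * sin (φ2-φ1)) = 0 := by
      linear_combination rel3
    exact (mul_eq_zero.mp h).resolve_right (by positivity)
  have hM1e : M1 = -M0 * (sin (φ2-φ0) * sin (φ3-φ0)) / (sin (φ2-φ1) * sin (φ3-φ1)) := by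
    field_simp
    linear_combination r1
  have hM2e : M2 = M0 * (sin (φ1-φ0) * sin (φ3-φ0)) / (sin (φ2-φ1) * sin (φ3-φ2)) := by
    field_simp
    linear_combination -r2
  have hM3e : M3 = -M0 * (sin (φ1-φ0) * sin (φ2-φ0)) / (sin (φ3-φ1) * sin (φ3-φ2)) := by
    field_simp
    linear_combination r3
  -- Ptolemy relation for the diagonals
  have hPt : sin (φ2-φ0) * sin (φ3-φ1)
      = sin (φ1-φ0) * sin (φ3-φ2) + sin (φ2-φ1) * sin (φ3-φ0) := ptolemy φ0 φ1 φ2 φ3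
  have i3 := idI3 φ0 φ1 φ2 φ3
  have i4 := idI4 φ0 φ1 φ2 φ3
  have hXneg : sin (φ1+φ2-φ0-φ3) = -sin (φ0+φ3-φ1-φ2) := by
    rw [show φ1+φ2-φ0-φ3 = -(φ0+φ3-φ1-φ2) by ring, Real.sin_neg]
  have hIprod : (sin (φ3-φ2) * sin (φ3-φ1) - sin (φ1-φ0) * sin (φ2-φ0))
      * (sin (φ1-φ0) * sin (φ3-φ1) - sin (φ3-φ2) * sin (φ2-φ0))
      = -(sin (φ3-φ0) * sin (φ2-φ1) * sin (φ0+φ3-φ1-φ2)^2) := by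
    linear_combination (sin (φ1-φ0) * sin (φ3-φ1) - sin (φ3-φ2) * sin (φ2-φ0)) * i3
      + (sin (φ3-φ0) * sin (φ0+φ3-φ1-φ2)) * i4
      + (sin (φ3-φ0) * sin (φ2-φ1) * sin (φ0+φ3-φ1-φ2)) * hXneg
  have hI : (sin (φ3-φ2) * sin (φ3-φ1) - sin (φ1-φ0) * sin (φ2-φ0))
      * (sin (φ1-φ0) * sin (φ3-φ1) - sin (φ3-φ2) * sin (φ2-φ0)) ≤ 0 := by
    rw [hIprod]
    have h : 0 ≤ sin (φ3-φ0) * sin (φ2-φ1) * sin (φ0+φ3-φ1-φ2)^2 := by positivity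
    linarith
  have hAB := coreIneq (sin (φ1-φ0)) (sin (φ2-φ1)) (sin (φ3-φ2)) (sin (φ3-φ0))
    (sin (φ2-φ0)) (sin (φ3-φ1)) hs01 hs12 hs23 hs03 hs02 hs13 hPt hI
  have hM0sq : 0 < M0^2 := lt_of_le_of_ne (sq_nonneg M0) (Ne.symm (pow_ne_zero 2 hM0))
  have hC2 : 0 < M0^2 * (sin (φ1-φ0) * sin (φ2-φ0) * sin (φ3-φ0))
      / (2*ρ*(sin (φ2-φ1) * sin (φ3-φ1) * sin (φ3-φ2))) := by positivity
  have hT : M0*M1/d01 + M0*M2/d02 + M0*M3/d03 + M1*M2/d12 + M1*M3/d13 + M2*M3/d23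
      = (M0^2 * (sin (φ1-φ0) * sin (φ2-φ0) * sin (φ3-φ0))
          / (2*ρ*(sin (φ2-φ1) * sin (φ3-φ1) * sin (φ3-φ2))))
        * ((sin (φ3-φ1)/sin (φ2-φ0)^2 + sin (φ2-φ0)/sin (φ3-φ1)^2)
          - ((sin (φ1-φ0)^3 + sin (φ3-φ2)^3)/(sin (φ1-φ0)^2 * sin (φ3-φ2)^2)
            + (sin (φ2-φ1)^3 + sin (φ3-φ0)^3)/(sin (φ2-φ1)^2 * sin (φ3-φ0)^2))) := by
    rw [hd01e, hd02e, hd03e, hd12e, hd13e, hd23e, hM1e, hM2e, hM3e]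
    field_simp
    ring
  rw [hT]
  exact mul_neg_of_pos_of_neg hC2 (by linarith [hAB])

lemma circleParam (ρ a b : ℝ) (hρ : 0 < ρ) (h : a^2 + b^2 = ρ^2) :
    ∃ θ, 0 ≤ θ ∧ θ < 2*π ∧ a = ρ * cos θ ∧ b = ρ * sin θ := by
  have hb2 : 1 - (a/ρ)^2 = (b/ρ)^2 := by
    field_simp
    linarith
  have ha1 : -1 ≤ a/ρ := by
    rw [le_div_iff₀ hρ]
    nlinarith [sq_nonneg b, sq_nonneg (a+ρ)]
  have ha2 : a/ρ ≤ 1 := by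
    rw [div_le_one hρ]
    nlinarith [sq_nonneg b, sq_nonneg (a-ρ)]
  have hca : cos (Real.arccos (a/ρ)) = a/ρ := Real.cos_arccos ha1 ha2
  have hsa : sin (Real.arccos (a/ρ)) = |b|/ρ := by
    rw [Real.sin_arccos, hb2, show (b/ρ)^2 = (|b|/ρ)^2 by rw [div_pow, div_pow, sq_abs],
      Real.sqrt_sq (by positivity)]
  have hα0 : 0 ≤ Real.arccos (a/ρ) := Real.arccos_nonneg _
  have hαpi : Real.arccos (a/ρ) ≤ π := Real.arccos_le_pi _
  rcases le_or_gt 0 b with hb | hb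
  · refine ⟨Real.arccos (a/ρ), hα0, by linarith [Real.pi_pos], ?_, ?_⟩
    · rw [hca]; field_simp
    · rw [hsa, abs_of_nonneg hb]; field_simp
  · have hαne : Real.arccos (a/ρ) ≠ 0 := by
      intro h0
      rw [h0, Real.sin_zero] at hsa
      have habs : |b| = 0 := by
        field_simp at hsa
        linarith [hsa]
      have : b = 0 := abs_eq_zero.mp habs
      exact (ne_of_lt hb) this
    have hαpos : 0 < Real.arccos (a/ρ) := lt_of_le_of_ne hα0 (Ne.symm hαne)
    refine ⟨2*π - Real.arccos (a/ρ), by linarith, by linarith, ?_, ?_⟩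
    · have hc : cos (2*π - Real.arccos (a/ρ)) = cos (Real.arccos (a/ρ)) := by
        rw [Real.cos_sub]; simp [Real.cos_two_pi, Real.sin_two_pi]
      rw [hc, hca]; field_simp
    · have hs : sin (2*π - Real.arccos (a/ρ)) = -sin (Real.arccos (a/ρ)) := by
        rw [Real.sin_sub]; simp [Real.cos_two_pi, Real.sin_two_pi]
      rw [hs, hsa, abs_of_neg hb]; field_simp

set_option maxHeartbeats 1000000 in
theorem no_cocircular_central_config_vanishing_mass_inertia :
    ¬ ∃ (r : Fin 4 → EuclideanSpace ℝ (Fin 2)) (m : Fin 4 → ℝ) (ξ : ℝ),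
        Function.Injective r ∧
        (∃ (c : EuclideanSpace ℝ (Fin 2)) (ρ : ℝ), ∀ i, dist (r i) c = ρ) ∧
        (∀ i, m i ≠ 0) ∧
        ∑ i, m i = 0 ∧
        ∑ i, m i • r i = 0 ∧
        IsCentral m r ξ := by
  rintro ⟨r, m, ξ, hinj, ⟨c, ρ, hcirc⟩, hm, hTM, hIv, hC⟩
  have hρ0 : 0 ≤ ρ := hcirc 0 ▸ dist_nonneg
  have hρ : 0 < ρ := by
    rcases eq_or_lt_of_le hρ0 with h | h
    · exfalso
      apply hinj.ne (show (0:Fin 4) ≠ 1 by decide)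
      have h0 : r 0 = c := by
        rw [← dist_eq_zero]; rw [hcirc 0]; exact h.symm
      have h1 : r 1 = c := by
        rw [← dist_eq_zero]; rw [hcirc 1]; exact h.symm
      rw [h0, h1]
    · exact h
  have hTM4 : m 0 + m 1 + m 2 + m 3 = 0 := by rw [Fin.sum_univ_four] at hTM; exact hTM
  have hIv4 : m 0 • r 0 + m 1 • r 1 + m 2 • r 2 + m 3 • r 3 = 0 := by
    rw [Fin.sum_univ_four] at hIv; exact hIv
  have hdist : ∀ i j : Fin 4, i ≠ j → (0:ℝ) < dist (r i) (r j) :=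
    fun i j h => dist_pos.mpr (fun e => h (hinj e))
  -- the key scalar identity
  have hg : ∀ i, accel m r i = ξ • r i + (accel m r 0 - ξ • r 0) := by
    intro i
    have h := hC 0 i
    rw [smul_sub] at h
    rw [sub_eq_iff_eq_add] at h
    rw [h]; abel
  have hacc : ∀ i, accel m r i = ∑ j : Fin 4, (m j / ‖r j - r i‖ ^ 3) • (r j - r i) := by
    intro i
    simp only [accel]
    refine Finset.sum_erase Finset.univ ?_
    simp
  have hKv : ∀ v : EuclideanSpace ℝ (Fin 2),
      m 0 * ⟪v, r 0 - c⟫ + m 1 * ⟪v, r 1 - c⟫ + m 2 * ⟪v, r 2 - c⟫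
        + m 3 * ⟪v, r 3 - c⟫ = 0 := by
    intro v
    have hz : m 0 • (r 0 - c) + m 1 • (r 1 - c) + m 2 • (r 2 - c) + m 3 • (r 3 - c) = 0 := by
      have hrw : m 0 • (r 0 - c) + m 1 • (r 1 - c) + m 2 • (r 2 - c) + m 3 • (r 3 - c)
          = (m 0 • r 0 + m 1 • r 1 + m 2 • r 2 + m 3 • r 3) - (m 0 + m 1 + m 2 + m 3) • c := by
        simp only [smul_sub, add_smul]; abel
      rw [hrw, hIv4, hTM4, zero_smul, sub_zero]
    calc m 0 * ⟪v, r 0 - c⟫ + m 1 * ⟪v, r 1 - c⟫ + m 2 * ⟪v, r 2 - c⟫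
          + m 3 * ⟪v, r 3 - c⟫
        = ⟪v, m 0 • (r 0 - c) + m 1 • (r 1 - c) + m 2 • (r 2 - c) + m 3 • (r 3 - c)⟫ := by
          simp only [inner_add_right, real_inner_smul_right]
      _ = 0 := by rw [hz, inner_zero_right]
  have hself : ∀ i, ⟪r i, r i - c⟫ = ρ^2 + ⟪c, r i - c⟫ := by
    intro i
    have h1 : ‖r i - c‖ = ρ := by rw [← dist_eq_norm]; exact hcirc i
    have h2 : ⟪r i, r i - c⟫ = ⟪r i - c, r i - c⟫ + ⟪c, r i - c⟫ := by
      rw [← inner_add_left, sub_add_cancel]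
    rw [h2, real_inner_self_eq_norm_sq, h1]
  have hS1 : m 0 * ⟪accel m r 0, r 0 - c⟫ + m 1 * ⟪accel m r 1, r 1 - c⟫
      + m 2 * ⟪accel m r 2, r 2 - c⟫ + m 3 * ⟪accel m r 3, r 3 - c⟫ = 0 := by
    have hgi : ∀ i, ⟪accel m r i, r i - c⟫
        = ξ * ⟪r i, r i - c⟫ + ⟪accel m r 0 - ξ • r 0, r i - c⟫ := by
      intro i
      conv_lhs => rw [hg i]
      rw [inner_add_left, real_inner_smul_left]
    simp only [hgi, hself]
    linear_combination ξ * hKv c + hKv (accel m r 0 - ξ • r 0) + ξ * ρ^2 * hTM4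
  have hpair : ∀ i j : Fin 4, i ≠ j →
      m i * ((m j / ‖r j - r i‖ ^ 3) * ⟪r j - r i, r i - c⟫)
        + m j * ((m i / ‖r i - r j‖ ^ 3) * ⟪r i - r j, r j - c⟫)
      = -(m i * m j / dist (r i) (r j)) := by
    intro i j hij
    have hd : (0:ℝ) < dist (r i) (r j) := hdist i j hij
    have hn1 : ‖r j - r i‖ = dist (r i) (r j) := (dist_eq_norm' _ _).symm
    have hn2 : ‖r i - r j‖ = dist (r i) (r j) := (dist_eq_norm _ _).symm
    have hinner : ⟪r j - r i, r i - c⟫ + ⟪r i - r j, r j - c⟫ = -(dist (r i) (r j))^2 := by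
      have h1 : (r i : EuclideanSpace ℝ (Fin 2)) - r j = -(r j - r i) := by abel
      rw [h1, inner_neg_left, ← sub_eq_add_neg, ← inner_sub_right,
        show (r i - c) - (r j - c) = -(r j - r i) by abel, inner_neg_right,
        real_inner_self_eq_norm_sq, hn1]
    rw [hn1, hn2]
    have e1 : m i * ((m j / dist (r i) (r j) ^ 3) * ⟪r j - r i, r i - c⟫)
        + m j * ((m i / dist (r i) (r j) ^ 3) * ⟪r i - r j, r j - c⟫)
        = (m i * m j / dist (r i) (r j)^3)
          * (⟪r j - r i, r i - c⟫ + ⟪r i - r j, r j - c⟫) := by ring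
    rw [e1, hinner]
    field_simp
  have hexp : ∀ i, ⟪accel m r i, r i - c⟫
      = ∑ j : Fin 4, (m j / ‖r j - r i‖ ^ 3) * ⟪r j - r i, r i - c⟫ := by
    intro i
    rw [hacc i, sum_inner]
    simp only [real_inner_smul_left]
  have hE : m 0 * m 1 / dist (r 0) (r 1) + m 0 * m 2 / dist (r 0) (r 2)
      + m 0 * m 3 / dist (r 0) (r 3) + m 1 * m 2 / dist (r 1) (r 2)
      + m 1 * m 3 / dist (r 1) (r 3) + m 2 * m 3 / dist (r 2) (r 3) = 0 := by
    have h := hS1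
    simp only [hexp, Fin.sum_univ_four, sub_self, inner_zero_left, mul_zero, add_zero,
      zero_add] at h
    linear_combination -h + hpair 0 1 (by decide) + hpair 0 2 (by decide)
      + hpair 0 3 (by decide) + hpair 1 2 (by decide) + hpair 1 3 (by decide)
      + hpair 2 3 (by decide)
  -- extract angles
  have hcoord : ∀ i : Fin 4, ∃ t, 0 ≤ t ∧ t < 2*π ∧ r i 0 = c 0 + ρ * cos t
      ∧ r i 1 = c 1 + ρ * sin t := by
    intro i
    have hsq : (r i 0 - c 0)^2 + (r i 1 - c 1)^2 = ρ^2 := by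
      have h1 : dist (r i) c = Real.sqrt ((r i 0 - c 0)^2 + (r i 1 - c 1)^2) := by
        rw [EuclideanSpace.dist_eq, Fin.sum_univ_two, Real.dist_eq, Real.dist_eq, sq_abs, sq_abs]
      have h2 := hcirc i
      rw [h1] at h2
      have h3 : (0:ℝ) ≤ (r i 0 - c 0)^2 + (r i 1 - c 1)^2 := by positivity
      rw [← h2, Real.sq_sqrt h3]
    obtain ⟨t, h0, h1, hx, hy⟩ := circleParam ρ _ _ hρ hsq
    exact ⟨t, h0, h1, by linarith, by linarith⟩
  choose θ hθlo hθhi hθx hθy using hcoord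
  have hq : ∀ i j : Fin 4, dist (r i) (r j)^2
      = 2*ρ^2*(1 - (cos (θ i) * cos (θ j) + sin (θ i) * sin (θ j))) := by
    intro i j
    have h1 : dist (r i) (r j) = Real.sqrt ((r i 0 - r j 0)^2 + (r i 1 - r j 1)^2) := by
      rw [EuclideanSpace.dist_eq, Fin.sum_univ_two, Real.dist_eq, Real.dist_eq, sq_abs, sq_abs]
    have h3 : (0:ℝ) ≤ (r i 0 - r j 0)^2 + (r i 1 - r j 1)^2 := by positivity
    rw [h1, Real.sq_sqrt h3, hθx i, hθx j, hθy i, hθy j]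
    linear_combination ρ^2 * Real.sin_sq_add_cos_sq (θ i) + ρ^2 * Real.sin_sq_add_cos_sq (θ j)
  have hθne : ∀ i j : Fin 4, i ≠ j → θ i ≠ θ j := by
    intro i j hij he
    apply hij
    apply hinj
    have hco : ∀ k : Fin 2, r i k = r j k := by
      intro k
      fin_cases k
      · show r i 0 = r j 0
        rw [hθx i, hθx j, he]
      · show r i 1 = r j 1
        rw [hθy i, hθy j, he]
    exact PiLp.ext hco
  have hx4 : m 0 * r 0 0 + m 1 * r 1 0 + m 2 * r 2 0 + m 3 * r 3 0 = 0 := by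
    have h := congrArg (fun v => v (0 : Fin 2)) hIv4
    simpa using h
  have hy4 : m 0 * r 0 1 + m 1 * r 1 1 + m 2 * r 2 1 + m 3 * r 3 1 = 0 := by
    have h := congrArg (fun v => v (1 : Fin 2)) hIv4
    simpa using h
  have hcosS : m 0 * cos (θ 0) + m 1 * cos (θ 1) + m 2 * cos (θ 2) + m 3 * cos (θ 3) = 0 := by
    rw [hθx 0, hθx 1, hθx 2, hθx 3] at hx4
    have h : ρ * (m 0 * cos (θ 0) + m 1 * cos (θ 1) + m 2 * cos (θ 2) + m 3 * cos (θ 3)) = 0 := by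
      linear_combination hx4 - c 0 * hTM4
    rcases mul_eq_zero.mp h with h' | h'
    · exact absurd h' hρ.ne'
    · exact h'
  have hsinS : m 0 * sin (θ 0) + m 1 * sin (θ 1) + m 2 * sin (θ 2) + m 3 * sin (θ 3) = 0 := by
    rw [hθy 0, hθy 1, hθy 2, hθy 3] at hy4
    have h : ρ * (m 0 * sin (θ 0) + m 1 * sin (θ 1) + m 2 * sin (θ 2) + m 3 * sin (θ 3)) = 0 := by
      linear_combination hy4 - c 1 * hTM4
    rcases mul_eq_zero.mp h with h' | h'
    · exact absurd h' hρ.ne'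
    · exact h'
  rcases lt_or_gt_of_ne (hθne 0 1 (by decide)) with h01 | h01
  · -- order [0, 1]
    rcases lt_or_gt_of_ne (hθne 1 2 (by decide)) with h12 | h12
    · -- order [0, 1, 2]
      rcases lt_or_gt_of_ne (hθne 2 3 (by decide)) with h23 | h23
      · -- order [0, 1, 2, 3]
        refine absurd ?_ (ne_of_lt (keyK ρ (θ 0) (θ 1) (θ 2) (θ 3) (m 0) (m 1) (m 2) (m 3)
          (dist (r 0) (r 1)) (dist (r 0) (r 2)) (dist (r 0) (r 3)) (dist (r 1) (r 2)) (dist (r 1) (r 3)) (dist (r 2) (r 3))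
          hρ (by linarith) (by linarith) (by linarith) (by linarith [hθlo 0, hθhi 3])
          (hm 0) (by linarith [hTM4]) (by linarith [hcosS]) (by linarith [hsinS])
          (hdist 0 1 (by decide)) (by linear_combination hq 0 1)
          (hdist 0 2 (by decide)) (by linear_combination hq 0 2)
          (hdist 0 3 (by decide)) (by linear_combination hq 0 3)
          (hdist 1 2 (by decide)) (by linear_combination hq 1 2)
          (hdist 1 3 (by decide)) (by linear_combination hq 1 3)
          (hdist 2 3 (by decide)) (by linear_combination hq 2 3)))
        linear_combination hE
      · rcases lt_or_gt_of_ne (hθne 1 3 (by decide)) with h13 | h13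
        · -- order [0, 1, 3, 2]
          refine absurd ?_ (ne_of_lt (keyK ρ (θ 0) (θ 1) (θ 3) (θ 2) (m 0) (m 1) (m 3) (m 2)
            (dist (r 0) (r 1)) (dist (r 0) (r 3)) (dist (r 0) (r 2)) (dist (r 1) (r 3)) (dist (r 1) (r 2)) (dist (r 2) (r 3))
            hρ (by linarith) (by linarith) (by linarith) (by linarith [hθlo 0, hθhi 2])
            (hm 0) (by linarith [hTM4]) (by linarith [hcosS]) (by linarith [hsinS])
            (hdist 0 1 (by decide)) (by linear_combination hq 0 1)
            (hdist 0 3 (by decide)) (by linear_combination hq 0 3)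
            (hdist 0 2 (by decide)) (by linear_combination hq 0 2)
            (hdist 1 3 (by decide)) (by linear_combination hq 1 3)
            (hdist 1 2 (by decide)) (by linear_combination hq 1 2)
            (hdist 2 3 (by decide)) (by linear_combination hq 2 3)))
          linear_combination hE
        · rcases lt_or_gt_of_ne (hθne 0 3 (by decide)) with h03 | h03
          · -- order [0, 3, 1, 2]
            refine absurd ?_ (ne_of_lt (keyK ρ (θ 0) (θ 3) (θ 1) (θ 2) (m 0) (m 3) (m 1) (m 2)
              (dist (r 0) (r 3)) (dist (r 0) (r 1)) (dist (r 0) (r 2)) (dist (r 1) (r 3)) (dist (r 2) (r 3)) (dist (r 1) (r 2))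
              hρ (by linarith) (by linarith) (by linarith) (by linarith [hθlo 0, hθhi 2])
              (hm 0) (by linarith [hTM4]) (by linarith [hcosS]) (by linarith [hsinS])
              (hdist 0 3 (by decide)) (by linear_combination hq 0 3)
              (hdist 0 1 (by decide)) (by linear_combination hq 0 1)
              (hdist 0 2 (by decide)) (by linear_combination hq 0 2)
              (hdist 1 3 (by decide)) (by linear_combination hq 1 3)
              (hdist 2 3 (by decide)) (by linear_combination hq 2 3)
              (hdist 1 2 (by decide)) (by linear_combination hq 1 2)))
            linear_combination hE
          · -- order [3, 0, 1, 2]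
            refine absurd ?_ (ne_of_lt (keyK ρ (θ 3) (θ 0) (θ 1) (θ 2) (m 3) (m 0) (m 1) (m 2)
              (dist (r 0) (r 3)) (dist (r 1) (r 3)) (dist (r 2) (r 3)) (dist (r 0) (r 1)) (dist (r 0) (r 2)) (dist (r 1) (r 2))
              hρ (by linarith) (by linarith) (by linarith) (by linarith [hθlo 3, hθhi 2])
              (hm 3) (by linarith [hTM4]) (by linarith [hcosS]) (by linarith [hsinS])
              (hdist 0 3 (by decide)) (by linear_combination hq 0 3)
              (hdist 1 3 (by decide)) (by linear_combination hq 1 3)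
              (hdist 2 3 (by decide)) (by linear_combination hq 2 3)
              (hdist 0 1 (by decide)) (by linear_combination hq 0 1)
              (hdist 0 2 (by decide)) (by linear_combination hq 0 2)
              (hdist 1 2 (by decide)) (by linear_combination hq 1 2)))
            linear_combination hE
    · rcases lt_or_gt_of_ne (hθne 0 2 (by decide)) with h02 | h02
      · -- order [0, 2, 1]
        rcases lt_or_gt_of_ne (hθne 1 3 (by decide)) with h13 | h13
        · -- order [0, 2, 1, 3]
          refine absurd ?_ (ne_of_lt (keyK ρ (θ 0) (θ 2) (θ 1) (θ 3) (m 0) (m 2) (m 1) (m 3)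
            (dist (r 0) (r 2)) (dist (r 0) (r 1)) (dist (r 0) (r 3)) (dist (r 1) (r 2)) (dist (r 2) (r 3)) (dist (r 1) (r 3))
            hρ (by linarith) (by linarith) (by linarith) (by linarith [hθlo 0, hθhi 3])
            (hm 0) (by linarith [hTM4]) (by linarith [hcosS]) (by linarith [hsinS])
            (hdist 0 2 (by decide)) (by linear_combination hq 0 2)
            (hdist 0 1 (by decide)) (by linear_combination hq 0 1)
            (hdist 0 3 (by decide)) (by linear_combination hq 0 3)
            (hdist 1 2 (by decide)) (by linear_combination hq 1 2)
            (hdist 2 3 (by decide)) (by linear_combination hq 2 3)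
            (hdist 1 3 (by decide)) (by linear_combination hq 1 3)))
          linear_combination hE
        · rcases lt_or_gt_of_ne (hθne 2 3 (by decide)) with h23 | h23
          · -- order [0, 2, 3, 1]
            refine absurd ?_ (ne_of_lt (keyK ρ (θ 0) (θ 2) (θ 3) (θ 1) (m 0) (m 2) (m 3) (m 1)
              (dist (r 0) (r 2)) (dist (r 0) (r 3)) (dist (r 0) (r 1)) (dist (r 2) (r 3)) (dist (r 1) (r 2)) (dist (r 1) (r 3))
              hρ (by linarith) (by linarith) (by linarith) (by linarith [hθlo 0, hθhi 1])
              (hm 0) (by linarith [hTM4]) (by linarith [hcosS]) (by linarith [hsinS])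
              (hdist 0 2 (by decide)) (by linear_combination hq 0 2)
              (hdist 0 3 (by decide)) (by linear_combination hq 0 3)
              (hdist 0 1 (by decide)) (by linear_combination hq 0 1)
              (hdist 2 3 (by decide)) (by linear_combination hq 2 3)
              (hdist 1 2 (by decide)) (by linear_combination hq 1 2)
              (hdist 1 3 (by decide)) (by linear_combination hq 1 3)))
            linear_combination hE
          · rcases lt_or_gt_of_ne (hθne 0 3 (by decide)) with h03 | h03
            · -- order [0, 3, 2, 1]
              refine absurd ?_ (ne_of_lt (keyK ρ (θ 0) (θ 3) (θ 2) (θ 1) (m 0) (m 3) (m 2) (m 1)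
                (dist (r 0) (r 3)) (dist (r 0) (r 2)) (dist (r 0) (r 1)) (dist (r 2) (r 3)) (dist (r 1) (r 3)) (dist (r 1) (r 2))
                hρ (by linarith) (by linarith) (by linarith) (by linarith [hθlo 0, hθhi 1])
                (hm 0) (by linarith [hTM4]) (by linarith [hcosS]) (by linarith [hsinS])
                (hdist 0 3 (by decide)) (by linear_combination hq 0 3)
                (hdist 0 2 (by decide)) (by linear_combination hq 0 2)
                (hdist 0 1 (by decide)) (by linear_combination hq 0 1)
                (hdist 2 3 (by decide)) (by linear_combination hq 2 3)
                (hdist 1 3 (by decide)) (by linear_combination hq 1 3)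
                (hdist 1 2 (by decide)) (by linear_combination hq 1 2)))
              linear_combination hE
            · -- order [3, 0, 2, 1]
              refine absurd ?_ (ne_of_lt (keyK ρ (θ 3) (θ 0) (θ 2) (θ 1) (m 3) (m 0) (m 2) (m 1)
                (dist (r 0) (r 3)) (dist (r 2) (r 3)) (dist (r 1) (r 3)) (dist (r 0) (r 2)) (dist (r 0) (r 1)) (dist (r 1) (r 2))
                hρ (by linarith) (by linarith) (by linarith) (by linarith [hθlo 3, hθhi 1])
                (hm 3) (by linarith [hTM4]) (by linarith [hcosS]) (by linarith [hsinS])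
                (hdist 0 3 (by decide)) (by linear_combination hq 0 3)
                (hdist 2 3 (by decide)) (by linear_combination hq 2 3)
                (hdist 1 3 (by decide)) (by linear_combination hq 1 3)
                (hdist 0 2 (by decide)) (by linear_combination hq 0 2)
                (hdist 0 1 (by decide)) (by linear_combination hq 0 1)
                (hdist 1 2 (by decide)) (by linear_combination hq 1 2)))
              linear_combination hE
      · -- order [2, 0, 1]
        rcases lt_or_gt_of_ne (hθne 1 3 (by decide)) with h13 | h13
        · -- order [2, 0, 1, 3]
          refine absurd ?_ (ne_of_lt (keyK ρ (θ 2) (θ 0) (θ 1) (θ 3) (m 2) (m 0) (m 1) (m 3)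
            (dist (r 0) (r 2)) (dist (r 1) (r 2)) (dist (r 2) (r 3)) (dist (r 0) (r 1)) (dist (r 0) (r 3)) (dist (r 1) (r 3))
            hρ (by linarith) (by linarith) (by linarith) (by linarith [hθlo 2, hθhi 3])
            (hm 2) (by linarith [hTM4]) (by linarith [hcosS]) (by linarith [hsinS])
            (hdist 0 2 (by decide)) (by linear_combination hq 0 2)
            (hdist 1 2 (by decide)) (by linear_combination hq 1 2)
            (hdist 2 3 (by decide)) (by linear_combination hq 2 3)
            (hdist 0 1 (by decide)) (by linear_combination hq 0 1)
            (hdist 0 3 (by decide)) (by linear_combination hq 0 3)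
            (hdist 1 3 (by decide)) (by linear_combination hq 1 3)))
          linear_combination hE
        · rcases lt_or_gt_of_ne (hθne 0 3 (by decide)) with h03 | h03
          · -- order [2, 0, 3, 1]
            refine absurd ?_ (ne_of_lt (keyK ρ (θ 2) (θ 0) (θ 3) (θ 1) (m 2) (m 0) (m 3) (m 1)
              (dist (r 0) (r 2)) (dist (r 2) (r 3)) (dist (r 1) (r 2)) (dist (r 0) (r 3)) (dist (r 0) (r 1)) (dist (r 1) (r 3))
              hρ (by linarith) (by linarith) (by linarith) (by linarith [hθlo 2, hθhi 1])
              (hm 2) (by linarith [hTM4]) (by linarith [hcosS]) (by linarith [hsinS])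
              (hdist 0 2 (by decide)) (by linear_combination hq 0 2)
              (hdist 2 3 (by decide)) (by linear_combination hq 2 3)
              (hdist 1 2 (by decide)) (by linear_combination hq 1 2)
              (hdist 0 3 (by decide)) (by linear_combination hq 0 3)
              (hdist 0 1 (by decide)) (by linear_combination hq 0 1)
              (hdist 1 3 (by decide)) (by linear_combination hq 1 3)))
            linear_combination hE
          · rcases lt_or_gt_of_ne (hθne 2 3 (by decide)) with h23 | h23
            · -- order [2, 3, 0, 1]
              refine absurd ?_ (ne_of_lt (keyK ρ (θ 2) (θ 3) (θ 0) (θ 1) (m 2) (m 3) (m 0) (m 1)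
                (dist (r 2) (r 3)) (dist (r 0) (r 2)) (dist (r 1) (r 2)) (dist (r 0) (r 3)) (dist (r 1) (r 3)) (dist (r 0) (r 1))
                hρ (by linarith) (by linarith) (by linarith) (by linarith [hθlo 2, hθhi 1])
                (hm 2) (by linarith [hTM4]) (by linarith [hcosS]) (by linarith [hsinS])
                (hdist 2 3 (by decide)) (by linear_combination hq 2 3)
                (hdist 0 2 (by decide)) (by linear_combination hq 0 2)
                (hdist 1 2 (by decide)) (by linear_combination hq 1 2)
                (hdist 0 3 (by decide)) (by linear_combination hq 0 3)
                (hdist 1 3 (by decide)) (by linear_combination hq 1 3)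
                (hdist 0 1 (by decide)) (by linear_combination hq 0 1)))
              linear_combination hE
            · -- order [3, 2, 0, 1]
              refine absurd ?_ (ne_of_lt (keyK ρ (θ 3) (θ 2) (θ 0) (θ 1) (m 3) (m 2) (m 0) (m 1)
                (dist (r 2) (r 3)) (dist (r 0) (r 3)) (dist (r 1) (r 3)) (dist (r 0) (r 2)) (dist (r 1) (r 2)) (dist (r 0) (r 1))
                hρ (by linarith) (by linarith) (by linarith) (by linarith [hθlo 3, hθhi 1])
                (hm 3) (by linarith [hTM4]) (by linarith [hcosS]) (by linarith [hsinS])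
                (hdist 2 3 (by decide)) (by linear_combination hq 2 3)
                (hdist 0 3 (by decide)) (by linear_combination hq 0 3)
                (hdist 1 3 (by decide)) (by linear_combination hq 1 3)
                (hdist 0 2 (by decide)) (by linear_combination hq 0 2)
                (hdist 1 2 (by decide)) (by linear_combination hq 1 2)
                (hdist 0 1 (by decide)) (by linear_combination hq 0 1)))
              linear_combination hE
  · -- order [1, 0]
    rcases lt_or_gt_of_ne (hθne 0 2 (by decide)) with h02 | h02
    · -- order [1, 0, 2]
      rcases lt_or_gt_of_ne (hθne 2 3 (by decide)) with h23 | h23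
      · -- order [1, 0, 2, 3]
        refine absurd ?_ (ne_of_lt (keyK ρ (θ 1) (θ 0) (θ 2) (θ 3) (m 1) (m 0) (m 2) (m 3)
          (dist (r 0) (r 1)) (dist (r 1) (r 2)) (dist (r 1) (r 3)) (dist (r 0) (r 2)) (dist (r 0) (r 3)) (dist (r 2) (r 3))
          hρ (by linarith) (by linarith) (by linarith) (by linarith [hθlo 1, hθhi 3])
          (hm 1) (by linarith [hTM4]) (by linarith [hcosS]) (by linarith [hsinS])
          (hdist 0 1 (by decide)) (by linear_combination hq 0 1)
          (hdist 1 2 (by decide)) (by linear_combination hq 1 2)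
          (hdist 1 3 (by decide)) (by linear_combination hq 1 3)
          (hdist 0 2 (by decide)) (by linear_combination hq 0 2)
          (hdist 0 3 (by decide)) (by linear_combination hq 0 3)
          (hdist 2 3 (by decide)) (by linear_combination hq 2 3)))
        linear_combination hE
      · rcases lt_or_gt_of_ne (hθne 0 3 (by decide)) with h03 | h03
        · -- order [1, 0, 3, 2]
          refine absurd ?_ (ne_of_lt (keyK ρ (θ 1) (θ 0) (θ 3) (θ 2) (m 1) (m 0) (m 3) (m 2)
            (dist (r 0) (r 1)) (dist (r 1) (r 3)) (dist (r 1) (r 2)) (dist (r 0) (r 3)) (dist (r 0) (r 2)) (dist (r 2) (r 3))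
            hρ (by linarith) (by linarith) (by linarith) (by linarith [hθlo 1, hθhi 2])
            (hm 1) (by linarith [hTM4]) (by linarith [hcosS]) (by linarith [hsinS])
            (hdist 0 1 (by decide)) (by linear_combination hq 0 1)
            (hdist 1 3 (by decide)) (by linear_combination hq 1 3)
            (hdist 1 2 (by decide)) (by linear_combination hq 1 2)
            (hdist 0 3 (by decide)) (by linear_combination hq 0 3)
            (hdist 0 2 (by decide)) (by linear_combination hq 0 2)
            (hdist 2 3 (by decide)) (by linear_combination hq 2 3)))
          linear_combination hE
        · rcases lt_or_gt_of_ne (hθne 1 3 (by decide)) with h13 | h13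
          · -- order [1, 3, 0, 2]
            refine absurd ?_ (ne_of_lt (keyK ρ (θ 1) (θ 3) (θ 0) (θ 2) (m 1) (m 3) (m 0) (m 2)
              (dist (r 1) (r 3)) (dist (r 0) (r 1)) (dist (r 1) (r 2)) (dist (r 0) (r 3)) (dist (r 2) (r 3)) (dist (r 0) (r 2))
              hρ (by linarith) (by linarith) (by linarith) (by linarith [hθlo 1, hθhi 2])
              (hm 1) (by linarith [hTM4]) (by linarith [hcosS]) (by linarith [hsinS])
              (hdist 1 3 (by decide)) (by linear_combination hq 1 3)
              (hdist 0 1 (by decide)) (by linear_combination hq 0 1)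
              (hdist 1 2 (by decide)) (by linear_combination hq 1 2)
              (hdist 0 3 (by decide)) (by linear_combination hq 0 3)
              (hdist 2 3 (by decide)) (by linear_combination hq 2 3)
              (hdist 0 2 (by decide)) (by linear_combination hq 0 2)))
            linear_combination hE
          · -- order [3, 1, 0, 2]
            refine absurd ?_ (ne_of_lt (keyK ρ (θ 3) (θ 1) (θ 0) (θ 2) (m 3) (m 1) (m 0) (m 2)
              (dist (r 1) (r 3)) (dist (r 0) (r 3)) (dist (r 2) (r 3)) (dist (r 0) (r 1)) (dist (r 1) (r 2)) (dist (r 0) (r 2))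
              hρ (by linarith) (by linarith) (by linarith) (by linarith [hθlo 3, hθhi 2])
              (hm 3) (by linarith [hTM4]) (by linarith [hcosS]) (by linarith [hsinS])
              (hdist 1 3 (by decide)) (by linear_combination hq 1 3)
              (hdist 0 3 (by decide)) (by linear_combination hq 0 3)
              (hdist 2 3 (by decide)) (by linear_combination hq 2 3)
              (hdist 0 1 (by decide)) (by linear_combination hq 0 1)
              (hdist 1 2 (by decide)) (by linear_combination hq 1 2)
              (hdist 0 2 (by decide)) (by linear_combination hq 0 2)))
            linear_combination hE
    · rcases lt_or_gt_of_ne (hθne 1 2 (by decide)) with h12 | h12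
      · -- order [1, 2, 0]
        rcases lt_or_gt_of_ne (hθne 0 3 (by decide)) with h03 | h03
        · -- order [1, 2, 0, 3]
          refine absurd ?_ (ne_of_lt (keyK ρ (θ 1) (θ 2) (θ 0) (θ 3) (m 1) (m 2) (m 0) (m 3)
            (dist (r 1) (r 2)) (dist (r 0) (r 1)) (dist (r 1) (r 3)) (dist (r 0) (r 2)) (dist (r 2) (r 3)) (dist (r 0) (r 3))
            hρ (by linarith) (by linarith) (by linarith) (by linarith [hθlo 1, hθhi 3])
            (hm 1) (by linarith [hTM4]) (by linarith [hcosS]) (by linarith [hsinS])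
            (hdist 1 2 (by decide)) (by linear_combination hq 1 2)
            (hdist 0 1 (by decide)) (by linear_combination hq 0 1)
            (hdist 1 3 (by decide)) (by linear_combination hq 1 3)
            (hdist 0 2 (by decide)) (by linear_combination hq 0 2)
            (hdist 2 3 (by decide)) (by linear_combination hq 2 3)
            (hdist 0 3 (by decide)) (by linear_combination hq 0 3)))
          linear_combination hE
        · rcases lt_or_gt_of_ne (hθne 2 3 (by decide)) with h23 | h23
          · -- order [1, 2, 3, 0]
            refine absurd ?_ (ne_of_lt (keyK ρ (θ 1) (θ 2) (θ 3) (θ 0) (m 1) (m 2) (m 3) (m 0)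
              (dist (r 1) (r 2)) (dist (r 1) (r 3)) (dist (r 0) (r 1)) (dist (r 2) (r 3)) (dist (r 0) (r 2)) (dist (r 0) (r 3))
              hρ (by linarith) (by linarith) (by linarith) (by linarith [hθlo 1, hθhi 0])
              (hm 1) (by linarith [hTM4]) (by linarith [hcosS]) (by linarith [hsinS])
              (hdist 1 2 (by decide)) (by linear_combination hq 1 2)
              (hdist 1 3 (by decide)) (by linear_combination hq 1 3)
              (hdist 0 1 (by decide)) (by linear_combination hq 0 1)
              (hdist 2 3 (by decide)) (by linear_combination hq 2 3)
              (hdist 0 2 (by decide)) (by linear_combination hq 0 2)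
              (hdist 0 3 (by decide)) (by linear_combination hq 0 3)))
            linear_combination hE
          · rcases lt_or_gt_of_ne (hθne 1 3 (by decide)) with h13 | h13
            · -- order [1, 3, 2, 0]
              refine absurd ?_ (ne_of_lt (keyK ρ (θ 1) (θ 3) (θ 2) (θ 0) (m 1) (m 3) (m 2) (m 0)
                (dist (r 1) (r 3)) (dist (r 1) (r 2)) (dist (r 0) (r 1)) (dist (r 2) (r 3)) (dist (r 0) (r 3)) (dist (r 0) (r 2))
                hρ (by linarith) (by linarith) (by linarith) (by linarith [hθlo 1, hθhi 0])
                (hm 1) (by linarith [hTM4]) (by linarith [hcosS]) (by linarith [hsinS])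
                (hdist 1 3 (by decide)) (by linear_combination hq 1 3)
                (hdist 1 2 (by decide)) (by linear_combination hq 1 2)
                (hdist 0 1 (by decide)) (by linear_combination hq 0 1)
                (hdist 2 3 (by decide)) (by linear_combination hq 2 3)
                (hdist 0 3 (by decide)) (by linear_combination hq 0 3)
                (hdist 0 2 (by decide)) (by linear_combination hq 0 2)))
              linear_combination hE
            · -- order [3, 1, 2, 0]
              refine absurd ?_ (ne_of_lt (keyK ρ (θ 3) (θ 1) (θ 2) (θ 0) (m 3) (m 1) (m 2) (m 0)
                (dist (r 1) (r 3)) (dist (r 2) (r 3)) (dist (r 0) (r 3)) (dist (r 1) (r 2)) (dist (r 0) (r 1)) (dist (r 0) (r 2))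
                hρ (by linarith) (by linarith) (by linarith) (by linarith [hθlo 3, hθhi 0])
                (hm 3) (by linarith [hTM4]) (by linarith [hcosS]) (by linarith [hsinS])
                (hdist 1 3 (by decide)) (by linear_combination hq 1 3)
                (hdist 2 3 (by decide)) (by linear_combination hq 2 3)
                (hdist 0 3 (by decide)) (by linear_combination hq 0 3)
                (hdist 1 2 (by decide)) (by linear_combination hq 1 2)
                (hdist 0 1 (by decide)) (by linear_combination hq 0 1)
                (hdist 0 2 (by decide)) (by linear_combination hq 0 2)))
              linear_combination hE
      · -- order [2, 1, 0]
        rcases lt_or_gt_of_ne (hθne 0 3 (by decide)) with h03 | h03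
        · -- order [2, 1, 0, 3]
          refine absurd ?_ (ne_of_lt (keyK ρ (θ 2) (θ 1) (θ 0) (θ 3) (m 2) (m 1) (m 0) (m 3)
            (dist (r 1) (r 2)) (dist (r 0) (r 2)) (dist (r 2) (r 3)) (dist (r 0) (r 1)) (dist (r 1) (r 3)) (dist (r 0) (r 3))
            hρ (by linarith) (by linarith) (by linarith) (by linarith [hθlo 2, hθhi 3])
            (hm 2) (by linarith [hTM4]) (by linarith [hcosS]) (by linarith [hsinS])
            (hdist 1 2 (by decide)) (by linear_combination hq 1 2)
            (hdist 0 2 (by decide)) (by linear_combination hq 0 2)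
            (hdist 2 3 (by decide)) (by linear_combination hq 2 3)
            (hdist 0 1 (by decide)) (by linear_combination hq 0 1)
            (hdist 1 3 (by decide)) (by linear_combination hq 1 3)
            (hdist 0 3 (by decide)) (by linear_combination hq 0 3)))
          linear_combination hE
        · rcases lt_or_gt_of_ne (hθne 1 3 (by decide)) with h13 | h13
          · -- order [2, 1, 3, 0]
            refine absurd ?_ (ne_of_lt (keyK ρ (θ 2) (θ 1) (θ 3) (θ 0) (m 2) (m 1) (m 3) (m 0)
              (dist (r 1) (r 2)) (dist (r 2) (r 3)) (dist (r 0) (r 2)) (dist (r 1) (r 3)) (dist (r 0) (r 1)) (dist (r 0) (r 3))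
              hρ (by linarith) (by linarith) (by linarith) (by linarith [hθlo 2, hθhi 0])
              (hm 2) (by linarith [hTM4]) (by linarith [hcosS]) (by linarith [hsinS])
              (hdist 1 2 (by decide)) (by linear_combination hq 1 2)
              (hdist 2 3 (by decide)) (by linear_combination hq 2 3)
              (hdist 0 2 (by decide)) (by linear_combination hq 0 2)
              (hdist 1 3 (by decide)) (by linear_combination hq 1 3)
              (hdist 0 1 (by decide)) (by linear_combination hq 0 1)
              (hdist 0 3 (by decide)) (by linear_combination hq 0 3)))
            linear_combination hE
          · rcases lt_or_gt_of_ne (hθne 2 3 (by decide)) with h23 | h23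
            · -- order [2, 3, 1, 0]
              refine absurd ?_ (ne_of_lt (keyK ρ (θ 2) (θ 3) (θ 1) (θ 0) (m 2) (m 3) (m 1) (m 0)
                (dist (r 2) (r 3)) (dist (r 1) (r 2)) (dist (r 0) (r 2)) (dist (r 1) (r 3)) (dist (r 0) (r 3)) (dist (r 0) (r 1))
                hρ (by linarith) (by linarith) (by linarith) (by linarith [hθlo 2, hθhi 0])
                (hm 2) (by linarith [hTM4]) (by linarith [hcosS]) (by linarith [hsinS])
                (hdist 2 3 (by decide)) (by linear_combination hq 2 3)
                (hdist 1 2 (by decide)) (by linear_combination hq 1 2)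
                (hdist 0 2 (by decide)) (by linear_combination hq 0 2)
                (hdist 1 3 (by decide)) (by linear_combination hq 1 3)
                (hdist 0 3 (by decide)) (by linear_combination hq 0 3)
                (hdist 0 1 (by decide)) (by linear_combination hq 0 1)))
              linear_combination hE
            · -- order [3, 2, 1, 0]
              refine absurd ?_ (ne_of_lt (keyK ρ (θ 3) (θ 2) (θ 1) (θ 0) (m 3) (m 2) (m 1) (m 0)
                (dist (r 2) (r 3)) (dist (r 1) (r 3)) (dist (r 0) (r 3)) (dist (r 1) (r 2)) (dist (r 0) (r 2)) (dist (r 0) (r 1))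
                hρ (by linarith) (by linarith) (by linarith) (by linarith [hθlo 3, hθhi 0])
                (hm 3) (by linarith [hTM4]) (by linarith [hcosS]) (by linarith [hsinS])
                (hdist 2 3 (by decide)) (by linear_combination hq 2 3)
                (hdist 1 3 (by decide)) (by linear_combination hq 1 3)
                (hdist 0 3 (by decide)) (by linear_combination hq 0 3)
                (hdist 1 2 (by decide)) (by linear_combination hq 1 2)
                (hdist 0 2 (by decide)) (by linear_combination hq 0 2)
                (hdist 0 1 (by decide)) (by linear_combination hq 0 1)))
              linear_combination hE
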